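/- Let ξ ∈ ℝ^n and x₀ = Π^n_m ξ be its cross-dimensional projection onto ℝ^m. Then the residual is orthogonal to the projection in the cross-dimensional inner product: ⟨ξ − x₀, x₀⟩_V = 0. -/

import Mathlib

open scoped BigOperators

/-- `rep t x` is `x ⊗ 1_{t/m}`: each entry of `x ∈ ℝ^m` repeated `t/m` consecutive times. -/
noncomputable def rep (t : ℕ) {m : ℕ} (x : Fin m → ℝ) : Fin t → ℝ :=
  fun i => if h : i.1 / (t / m) < m then x ⟨i.1 / (t / m), h⟩ else 0

/-- Cross-dimensional norm `‖x‖_V = sqrt((1/n) Σ xᵢ²)`. -/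
noncomputable def vnorm {n : ℕ} (x : Fin n → ℝ) : ℝ :=
  Real.sqrt ((1 / (n : ℝ)) * ∑ i, x i ^ 2)

/-- Cross-dimensional inner product `⟨x,y⟩_V`. -/
noncomputable def vinner {m n : ℕ} (x : Fin m → ℝ) (y : Fin n → ℝ) : ℝ :=
  (1 / (Nat.lcm m n : ℝ)) * ∑ i, rep (Nat.lcm m n) x i * rep (Nat.lcm m n) y i

/-- Cross-dimensional distance `d_V(x,y) = ‖x ⊖ y‖_V`. -/
noncomputable def dV {m n : ℕ} (x : Fin m → ℝ) (y : Fin n → ℝ) : ℝ :=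
  vnorm (rep (Nat.lcm m n) x - rep (Nat.lcm m n) y)

/-- `onesRepMat m t` is `I_m ⊗ 1ᵀ_{t/m}` (an `m × t` matrix, for `m ∣ t`). -/
noncomputable def onesRepMat (m t : ℕ) : Matrix (Fin m) (Fin t) ℝ :=
  Matrix.of fun i j => if j.1 / (t / m) = i.1 then (1 : ℝ) else 0

/-- `PiMat n m` is the cross-dimensional projection matrix `Π^n_m : ℝ^n → ℝ^m`,
`Π^n_m = (m/t)(I_m ⊗ 1ᵀ_{t/m})(I_n ⊗ 1_{t/n})`, `t = lcm(m,n)`. -/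
noncomputable def PiMat (n m : ℕ) : Matrix (Fin m) (Fin n) ℝ :=
  ((m : ℝ) / (Nat.lcm m n : ℝ)) •
    (onesRepMat m (Nat.lcm m n) * (onesRepMat n (Nat.lcm m n)).transpose)

/-- `A ⊗ 1ᵀ_{t/n}` for `A ∈ M_{m×n}` (an `m × t` matrix). -/
noncomputable def repCols {m n : ℕ} (t : ℕ) (A : Matrix (Fin m) (Fin n) ℝ) :
    Matrix (Fin m) (Fin t) ℝ :=
  Matrix.of fun i j => if h : j.1 / (t / n) < n then A i ⟨j.1 / (t / n), h⟩ else 0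

/-- `B ⊗ 1_{t/p}` for `B ∈ M_{p×q}` (a `t × q` matrix). -/
noncomputable def repRows {p q : ℕ} (t : ℕ) (B : Matrix (Fin p) (Fin q) ℝ) :
    Matrix (Fin t) (Fin q) ℝ :=
  Matrix.of fun j l => if h : j.1 / (t / p) < p then B ⟨j.1 / (t / p), h⟩ l else 0

/-- Weighted dimension-keeping semi-tensor product
`A ⋉̄ B = (n/t)(A ⊗ 1ᵀ_{t/n})(B ⊗ 1_{t/p})`, `t = lcm(n,p)`. -/
noncomputable def dkstp {m n p q : ℕ} (A : Matrix (Fin m) (Fin n) ℝ)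
    (B : Matrix (Fin p) (Fin q) ℝ) : Matrix (Fin m) (Fin q) ℝ :=
  ((n : ℝ) / (Nat.lcm n p : ℝ)) • (repCols (Nat.lcm n p) A * repRows (Nat.lcm n p) B)

/-- Bridge matrix `Ψ_{n×p} = (n/t)(I_n ⊗ 1ᵀ_{t/n})(I_p ⊗ 1_{t/p})`, `t = lcm(n,p)`. -/
noncomputable def Psi (n p : ℕ) : Matrix (Fin n) (Fin p) ℝ :=
  ((n : ℝ) / (Nat.lcm n p : ℝ)) •
    (onesRepMat n (Nat.lcm n p) * (onesRepMat p (Nat.lcm n p)).transpose)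

/-- The residual of the cross-dimensional projection is `⟨·,·⟩_V`-orthogonal to the
projection: `⟨ξ − x₀, x₀⟩_V = 0` where `x₀ = Π^n_m ξ`. -/

lemma rep_self {t : ℕ} (ht : 0 < t) (w : Fin t → ℝ) : rep t w = w := by
  funext i
  simp [rep, Nat.div_self ht, i.2]

lemma sum_split' {t m d : ℕ} (ht : t = m * d) (f : Fin t → ℝ) :
    ∑ i, f i = ∑ k : Fin m, ∑ r : Fin d, f (Fin.cast ht.symm (finProdFinEquiv (k, r))) := by
  subst ht
  rw [← Equiv.sum_comp finProdFinEquiv f, Fintype.sum_prod_type]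
  rfl

lemma idx_div {t m d : ℕ} (ht : t = m * d) (hd : 0 < d) (k : Fin m) (r : Fin d) :
    ((Fin.cast ht.symm (finProdFinEquiv (k, r)) : Fin t) : ℕ) / d = k.1 := by
  simp only [Fin.coe_cast, finProdFinEquiv_apply_val]
  rw [Nat.add_mul_div_left _ _ hd, Nat.div_eq_of_lt r.2, Nat.zero_add]

theorem stmt8 (n m : ℕ) (hn : 0 < n) (hm : 0 < m) (ξ : Fin n → ℝ) :
    vinner
      (rep (Nat.lcm m n) ξ - rep (Nat.lcm m n) ((PiMat n m).mulVec ξ))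
      ((PiMat n m).mulVec ξ) = 0 := by

  have hmt : m ∣ Nat.lcm m n := Nat.dvd_lcm_left m n
  have hnt : n ∣ Nat.lcm m n := Nat.dvd_lcm_right m n
  set t := Nat.lcm m n with hts
  have htpos : 0 < t := Nat.pos_of_ne_zero (Nat.lcm_ne_zero hm.ne' hn.ne')
  set d := t / m with hds
  have ht : t = m * d := (Nat.mul_div_cancel' hmt).symm
  have hd : 0 < d := Nat.div_pos (Nat.le_of_dvd htpos hmt) hm
  set e := t / n with hes
  have hte : t = n * e := (Nat.mul_div_cancel' hnt).symm
  have he : 0 < e := Nat.div_pos (Nat.le_of_dvd htpos hnt) hn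
  set x₀ := (PiMat n m).mulVec ξ with hx0
  set u := rep t ξ with hu
  -- value of rep t x₀
  have hrep : ∀ i : Fin t, rep t x₀ i = x₀ ⟨i.1 / d, (Nat.div_lt_iff_lt_mul hd).2 (ht ▸ i.2)⟩ := by
    intro i
    have hlt : i.1 / (t / m) < m := by
      rw [← hds]; exact (Nat.div_lt_iff_lt_mul hd).2 (ht ▸ i.2)
    simp only [rep, hlt, dif_pos]
    rfl
  -- B^T ξ = u
  have hB : (onesRepMat n t).transpose.mulVec ξ = u := by
    funext i
    have hlt : i.1 / (t / n) < n := by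
      rw [← hes]; exact (Nat.div_lt_iff_lt_mul he).2 (hte ▸ i.2)
    have h1 : ∀ j : Fin n, (onesRepMat n t).transpose i j * ξ j
        = if j = ⟨i.1 / (t / n), hlt⟩ then ξ j else 0 := by
      intro j
      simp only [Matrix.transpose_apply, onesRepMat, Matrix.of_apply, ite_mul, one_mul, zero_mul]
      congr 1
      simp [Fin.ext_iff, eq_comm]
    simp only [Matrix.mulVec, dotProduct, h1, Finset.sum_ite_eq' Finset.univ,
      Finset.mem_univ, if_true]
    simp only [hu, rep, hlt, dif_pos]
  -- value of x₀
  have hx : ∀ k : Fin m, x₀ k = ((m : ℝ) / t) * ∑ i : Fin t, (if i.1 / d = k.1 then u i else 0) := by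
    intro k
    rw [hx0, PiMat, ← hts, Matrix.smul_mulVec, ← Matrix.mulVec_mulVec, hB]
    simp only [Pi.smul_apply, smul_eq_mul]
    congr 1
    simp only [Matrix.mulVec, dotProduct, onesRepMat, Matrix.of_apply, ite_mul, one_mul,
      zero_mul, ← hds]
  -- unfold vinner; lcm t m = t
  have hL : Nat.lcm t m = t := Nat.dvd_antisymm (Nat.lcm_dvd dvd_rfl hmt) (Nat.dvd_lcm_left _ _)
  rw [vinner, hL, rep_self htpos]
  apply mul_eq_zero_of_right
  rw [sum_split' ht]
  refine Finset.sum_eq_zero fun k _ => ?_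
  set S : ℝ := ∑ r : Fin d, u (Fin.cast ht.symm (finProdFinEquiv (k, r))) with hSdef
  have hrepk : ∀ r : Fin d, rep t x₀ (Fin.cast ht.symm (finProdFinEquiv (k, r))) = x₀ k := by
    intro r
    rw [hrep]
    congr 1
    exact Fin.ext (idx_div ht hd k r)
  have hS : (∑ i : Fin t, if i.1 / d = k.1 then u i else 0) = S := by
    rw [sum_split' ht]
    have h2 : ∀ (k' : Fin m) (r : Fin d),
        (if ((Fin.cast ht.symm (finProdFinEquiv (k', r)) : Fin t) : ℕ) / d = k.1
          then u (Fin.cast ht.symm (finProdFinEquiv (k', r))) else 0)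
        = if k' = k then u (Fin.cast ht.symm (finProdFinEquiv (k', r))) else 0 := by
      intro k' r
      rw [idx_div ht hd k' r]
      simp [Fin.ext_iff]
    simp only [h2]
    have h3 : ∀ k' : Fin m,
        (∑ r : Fin d, if k' = k then u (Fin.cast ht.symm (finProdFinEquiv (k', r))) else 0)
        = if k' = k then (∑ r : Fin d, u (Fin.cast ht.symm (finProdFinEquiv (k', r)))) else 0 := by
      intro k'
      split <;> simp
    simp only [h3]
    rw [Finset.sum_ite_eq' Finset.univ k]
    simp [hSdef]
  have hxkS : x₀ k = (m : ℝ) / t * S := by rw [hx k, hS]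
  have hm' : (m : ℝ) ≠ 0 := Nat.cast_ne_zero.2 hm.ne'
  have ht' : (t : ℝ) ≠ 0 := Nat.cast_ne_zero.2 htpos.ne'
  have htR : (t : ℝ) = (m : ℝ) * d := by exact_mod_cast congrArg (Nat.cast : ℕ → ℝ) ht
  have key : (d : ℝ) * ((m : ℝ) / t * S) = S := by
    rw [htR]
    field_simp
  simp only [Pi.sub_apply, hrepk]
  rw [← Finset.sum_mul, Finset.sum_sub_distrib, Finset.sum_const, Finset.card_univ,
    Fintype.card_fin, nsmul_eq_mul, ← hSdef, hxkS, key, sub_self, zero_mul]
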